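/- Let S and O be finite nonempty sets. Let M = (r,p), M_I = (r,p_I), and M̂ = (r,p̂) be SMDP models over (S,O) sharing the same reward function r with 0 ≤ r(s,o) ≤ Rmax, with ∑_{s'} p(s,o,s') ≤ γ̄, ∑_{s'} p_I(s,o,s') ≤ γ̄, and ∑_{s'} p̂(s,o,s') ≤ γ̄ for all (s,o) where γ̄ < 1, and with max_{s,o} ∑_{s'} |p(s,o,s') − p_I(s,o,s')| ≤ γ̄ · ζ. Let Q*, Q*_I, Q̂* be Bellman-optimal value functions for M, M_I, M̂ respectively, and let V*_{M_I}(s) = max_o Q*_I(s,o). Define Q-value iteration in M̂ by Q_0 = 0 and Q_k(s,o) = r(s,o) + ∑_{s'} p̂(s,o,s') · max_{o'} Q_{k−1}(s',o'). If max_{s,o} | ∑_{s'} ( p̂(s,o,s') − p_I(s,o,s') ) · V*_{M_I}(s') | ≤ ε₁, then for every k ≥ 0, ‖Q_k − Q*‖_∞ ≤ γ̄^k · Rmax/(1 − γ̄) + ε₁/(1 − γ̄) + ζ · γ̄ · Rmax/(1 − γ̄)². -/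

import Mathlib

noncomputable def fmax {α : Type*} [Fintype α] [Nonempty α] (f : α → ℝ) : ℝ :=
  Finset.univ.sup' Finset.univ_nonempty f

lemma fmax_le {α : Type*} [Fintype α] [Nonempty α] {f : α → ℝ} {c : ℝ}
    (h : ∀ a, f a ≤ c) : fmax f ≤ c :=
  Finset.sup'_le _ _ fun a _ => h a

lemma le_fmax {α : Type*} [Fintype α] [Nonempty α] (f : α → ℝ) (a : α) : f a ≤ fmax f :=
  Finset.le_sup' f (Finset.mem_univ a)

lemma exists_fmax {α : Type*} [Fintype α] [Nonempty α] (f : α → ℝ) : ∃ a, fmax f = f a := by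
  obtain ⟨a, -, ha⟩ := Finset.exists_mem_eq_sup' (Finset.univ_nonempty (α := α)) f
  exact ⟨a, ha⟩

lemma abs_fmax_le {α : Type*} [Fintype α] [Nonempty α] (f : α → ℝ) :
    |fmax f| ≤ fmax (fun a => |f a|) := by
  obtain ⟨a, ha⟩ := exists_fmax f
  rw [ha]; exact le_fmax (fun a => |f a|) a

lemma fmax_sub_le {α : Type*} [Fintype α] [Nonempty α] (f g : α → ℝ) :
    fmax f - fmax g ≤ fmax (fun a => |f a - g a|) := by
  have h : fmax f ≤ fmax g + fmax (fun a => |f a - g a|) := fmax_le fun a =>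
    calc f a ≤ g a + |f a - g a| := by
          have := le_abs_self (f a - g a); linarith
      _ ≤ fmax g + fmax (fun a => |f a - g a|) :=
          add_le_add (le_fmax g a) (le_fmax (fun a => |f a - g a|) a)
  linarith

lemma abs_fmax_sub_le {α : Type*} [Fintype α] [Nonempty α] (f g : α → ℝ) :
    |fmax f - fmax g| ≤ fmax (fun a => |f a - g a|) := by
  rw [abs_sub_le_iff]
  refine ⟨fmax_sub_le f g, ?_⟩
  have := fmax_sub_le g f
  simpa [abs_sub_comm] using this

lemma abs_sum_mul_le {S : Type*} [Fintype S] (q v : S → ℝ) (γ C : ℝ)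
    (hq : ∀ s, 0 ≤ q s) (hγ : ∑ s, q s ≤ γ) (hv : ∀ s, |v s| ≤ C) (hC : 0 ≤ C) :
    |∑ s, q s * v s| ≤ γ * C := by
  calc |∑ s, q s * v s| ≤ ∑ s, |q s * v s| := Finset.abs_sum_le_sum_abs _ _
    _ ≤ ∑ s, q s * C := Finset.sum_le_sum fun s _ => by
        rw [abs_mul, abs_of_nonneg (hq s)]
        exact mul_le_mul_of_nonneg_left (hv s) (hq s)
    _ = (∑ s, q s) * C := by rw [← Finset.sum_mul]
    _ ≤ γ * C := mul_le_mul_of_nonneg_right hγ hC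

/-- fixed point is bounded by Rmax/(1-γ). -/
lemma fixed_point_bound {S O : Type*} [Fintype S] [Fintype O] [Nonempty S] [Nonempty O]
    (r : S → O → ℝ) (q : S → O → S → ℝ) (Rmax γbar : ℝ)
    (hr0 : ∀ s o, 0 ≤ r s o) (hrR : ∀ s o, r s o ≤ Rmax)
    (hq : ∀ s o s', 0 ≤ q s o s') (hγ : ∀ s o, ∑ s', q s o s' ≤ γbar)
    (hγ0 : 0 ≤ γbar) (hγlt : γbar < 1)
    (Qf : S → O → ℝ)
    (hQf : ∀ s o, Qf s o = r s o + ∑ s' : S, q s o s' * fmax (fun o' => Qf s' o')) :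
    ∀ s o, |Qf s o| ≤ Rmax / (1 - γbar) := by
  have hR0 : 0 ≤ Rmax := (hr0 (Classical.arbitrary S) (Classical.arbitrary O)).trans
    (hrR _ _)
  set B := fmax (fun so : S × O => |Qf so.1 so.2|) with hB
  have hB0 : 0 ≤ B := (abs_nonneg _).trans
    (le_fmax (fun so : S × O => |Qf so.1 so.2|) (Classical.arbitrary _))
  have key : B ≤ Rmax + γbar * B := by
    refine fmax_le fun so => ?_
    obtain ⟨s, o⟩ := so
    rw [hQf s o]
    have h1 : |∑ s' : S, q s o s' * fmax (fun o' => Qf s' o')| ≤ γbar * B := by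
      refine abs_sum_mul_le _ _ _ _ (hq s o) (hγ s o) (fun s' => ?_) hB0
      refine (abs_fmax_le _).trans (fmax_le fun o' => ?_)
      exact le_fmax (fun so : S × O => |Qf so.1 so.2|) (s', o')
    calc |r s o + ∑ s' : S, q s o s' * fmax (fun o' => Qf s' o')|
        ≤ |r s o| + |∑ s' : S, q s o s' * fmax (fun o' => Qf s' o')| := abs_add_le _ _
      _ ≤ Rmax + γbar * B := add_le_add (by rw [abs_of_nonneg (hr0 s o)]; exact hrR s o) h1
  have hBle : B ≤ Rmax / (1 - γbar) := by
    rw [le_div_iff₀ (by linarith)]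
    nlinarith
  intro s o
  exact le_trans (le_fmax (fun so : S × O => |Qf so.1 so.2|) (s, o)) hBle

/-- difference of two fixed points. -/
lemma fixed_point_diff {S O : Type*} [Fintype S] [Fintype O] [Nonempty S] [Nonempty O]
    (r : S → O → ℝ) (q1 q2 : S → O → S → ℝ) (γbar E : ℝ)
    (hq1 : ∀ s o s', 0 ≤ q1 s o s') (hγ1 : ∀ s o, ∑ s', q1 s o s' ≤ γbar)
    (hγlt : γbar < 1)
    (Q1 Q2 : S → O → ℝ)
    (h1 : ∀ s o, Q1 s o = r s o + ∑ s' : S, q1 s o s' * fmax (fun o' => Q1 s' o'))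
    (h2 : ∀ s o, Q2 s o = r s o + ∑ s' : S, q2 s o s' * fmax (fun o' => Q2 s' o'))
    (hE : ∀ s o, |∑ s' : S, (q1 s o s' - q2 s o s') * fmax (fun o' => Q2 s' o')| ≤ E) :
    ∀ s o, |Q1 s o - Q2 s o| ≤ E / (1 - γbar) := by
  set D := fmax (fun so : S × O => |Q1 so.1 so.2 - Q2 so.1 so.2|) with hD
  have hD0 : 0 ≤ D := (abs_nonneg _).trans
    (le_fmax (fun so : S × O => |Q1 so.1 so.2 - Q2 so.1 so.2|) (Classical.arbitrary _))
  have key : D ≤ E + γbar * D := by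
    refine fmax_le fun so => ?_
    obtain ⟨s, o⟩ := so
    have hsplit : Q1 s o - Q2 s o =
        (∑ s' : S, (q1 s o s' - q2 s o s') * fmax (fun o' => Q2 s' o')) +
        ∑ s' : S, q1 s o s' * (fmax (fun o' => Q1 s' o') - fmax (fun o' => Q2 s' o')) := by
      rw [h1 s o, h2 s o, add_sub_add_left_eq_sub, ← Finset.sum_sub_distrib,
        ← Finset.sum_add_distrib]
      exact Finset.sum_congr rfl fun s' _ => by ring
    have h2' : |∑ s' : S, q1 s o s' * (fmax (fun o' => Q1 s' o') - fmax (fun o' => Q2 s' o'))|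
        ≤ γbar * D := by
      refine abs_sum_mul_le _ _ _ _ (hq1 s o) (hγ1 s o) (fun s' => ?_) hD0
      refine (abs_fmax_sub_le _ _).trans (fmax_le fun o' => ?_)
      exact le_fmax (fun so : S × O => |Q1 so.1 so.2 - Q2 so.1 so.2|) (s', o')
    calc |Q1 s o - Q2 s o| ≤
        |∑ s' : S, (q1 s o s' - q2 s o s') * fmax (fun o' => Q2 s' o')| +
        |∑ s' : S, q1 s o s' * (fmax (fun o' => Q1 s' o') - fmax (fun o' => Q2 s' o'))| := by
          rw [hsplit]; exact abs_add_le _ _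
      _ ≤ E + γbar * D := add_le_add (hE s o) h2'
  intro s o
  have : D ≤ E / (1 - γbar) := by
    rw [le_div_iff₀ (by linarith)]
    nlinarith
  exact le_trans (le_fmax (fun so : S × O => |Q1 so.1 so.2 - Q2 so.1 so.2|) (s, o)) this

/-- Deterministic core of Theorem 3 (sample complexity of temporally abstract partial
models): the error of the `k`-th Q-value-iteration iterate computed in the empirical
model decomposes into a geometric optimization term, an estimation term, and the
intent-approximation term. -/
theorem qvi_error_decomposition {S O : Type*} [Fintype S] [Fintype O] [Nonempty S] [Nonempty O]
    (r : S → O → ℝ) (p pI phat : S → O → S → ℝ)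
    (Rmax γbar ζ ε₁ : ℝ)
    (hr0 : ∀ s o, 0 ≤ r s o) (hrR : ∀ s o, r s o ≤ Rmax)
    (hp : ∀ s o s', 0 ≤ p s o s') (hpI : ∀ s o s', 0 ≤ pI s o s')
    (hphat : ∀ s o s', 0 ≤ phat s o s')
    (hγp : ∀ s o, ∑ s' : S, p s o s' ≤ γbar)
    (hγpI : ∀ s o, ∑ s' : S, pI s o s' ≤ γbar)
    (hγphat : ∀ s o, ∑ s' : S, phat s o s' ≤ γbar)
    (hγlt : γbar < 1)
    (hζ : fmax (fun so : S × O => ∑ s' : S, |p so.1 so.2 s' - pI so.1 so.2 s'|) ≤ γbar * ζ)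
    (Qstar QI Qhat : S → O → ℝ)
    (hQstar : ∀ s o, Qstar s o = r s o + ∑ s' : S, p s o s' * fmax (fun o' => Qstar s' o'))
    (hQI : ∀ s o, QI s o = r s o + ∑ s' : S, pI s o s' * fmax (fun o' => QI s' o'))
    (hQhat : ∀ s o, Qhat s o = r s o + ∑ s' : S, phat s o s' * fmax (fun o' => Qhat s' o'))
    (VstarMI : S → ℝ) (hVstarMI : ∀ s, VstarMI s = fmax (fun o => QI s o))
    (Q : ℕ → S → O → ℝ)
    (hQ0 : ∀ s o, Q 0 s o = 0)
    (hQk : ∀ k s o, Q (k + 1) s o =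
      r s o + ∑ s' : S, phat s o s' * fmax (fun o' => Q k s' o'))
    (hε₁ : fmax (fun so : S × O =>
      |∑ s' : S, (phat so.1 so.2 s' - pI so.1 so.2 s') * VstarMI s'|) ≤ ε₁) :
    ∀ k : ℕ,
      fmax (fun so : S × O => |Q k so.1 so.2 - Qstar so.1 so.2|) ≤
        γbar ^ k * Rmax / (1 - γbar) + ε₁ / (1 - γbar) +
          ζ * γbar * Rmax / (1 - γbar) ^ 2 := by
  have hγ0 : 0 ≤ γbar :=
    le_trans (Finset.sum_nonneg fun s' _ => hp (Classical.arbitrary S) (Classical.arbitrary O) s')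
      (hγp _ _)
  have h1γ : 0 < 1 - γbar := by linarith
  have hR0 : 0 ≤ Rmax :=
    (hr0 (Classical.arbitrary S) (Classical.arbitrary O)).trans (hrR _ _)
  have hQhat_bd := fixed_point_bound r phat Rmax γbar hr0 hrR hphat hγphat hγ0 hγlt Qhat hQhat
  have hQstar_bd := fixed_point_bound r p Rmax γbar hr0 hrR hp hγp hγ0 hγlt Qstar hQstar
  -- estimation term
  have hε₁' : ∀ s o,
      |∑ s' : S, (phat s o s' - pI s o s') * fmax (fun o' => QI s' o')| ≤ ε₁ := by
    intro s o
    have h := le_fmax (fun so : S × O =>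
      |∑ s' : S, (phat so.1 so.2 s' - pI so.1 so.2 s') * VstarMI s'|) (s, o)
    have h' := h.trans hε₁
    simpa only [hVstarMI] using h'
  have hA : ∀ s o, |Qhat s o - QI s o| ≤ ε₁ / (1 - γbar) :=
    fixed_point_diff r phat pI γbar ε₁ hphat hγphat hγlt Qhat QI hQhat hQI hε₁'
  -- intent term
  have hEB : ∀ s o, |∑ s' : S, (pI s o s' - p s o s') * fmax (fun o' => Qstar s' o')| ≤
      γbar * ζ * (Rmax / (1 - γbar)) := by
    intro s o
    calc |∑ s' : S, (pI s o s' - p s o s') * fmax (fun o' => Qstar s' o')|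
        ≤ ∑ s' : S, |(pI s o s' - p s o s') * fmax (fun o' => Qstar s' o')| :=
          Finset.abs_sum_le_sum_abs _ _
      _ ≤ ∑ s' : S, |p s o s' - pI s o s'| * (Rmax / (1 - γbar)) :=
          Finset.sum_le_sum fun s' _ => by
            rw [abs_mul, abs_sub_comm]
            exact mul_le_mul_of_nonneg_left
              ((abs_fmax_le _).trans (fmax_le fun o' => hQstar_bd s' o')) (abs_nonneg _)
      _ = (∑ s' : S, |p s o s' - pI s o s'|) * (Rmax / (1 - γbar)) :=
          (Finset.sum_mul _ _ _).symm
      _ ≤ γbar * ζ * (Rmax / (1 - γbar)) :=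
          mul_le_mul_of_nonneg_right
            ((le_fmax (fun so : S × O => ∑ s' : S, |p so.1 so.2 s' - pI so.1 so.2 s'|)
              (s, o)).trans hζ)
            (div_nonneg hR0 h1γ.le)
  have hB : ∀ s o, |QI s o - Qstar s o| ≤ γbar * ζ * (Rmax / (1 - γbar)) / (1 - γbar) :=
    fixed_point_diff r pI p γbar _ hpI hγpI hγlt QI Qstar hQI hQstar hEB
  -- iteration term
  have hC : ∀ k s o, |Q k s o - Qhat s o| ≤ γbar ^ k * (Rmax / (1 - γbar)) := by
    intro k
    induction k with
    | zero =>
      intro s o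
      simpa [hQ0, abs_sub_comm] using hQhat_bd s o
    | succ k ih =>
      intro s o
      have hsplit : Q (k + 1) s o - Qhat s o =
          ∑ s' : S, phat s o s' * (fmax (fun o' => Q k s' o') - fmax (fun o' => Qhat s' o')) := by
        rw [hQk k s o, hQhat s o, add_sub_add_left_eq_sub, ← Finset.sum_sub_distrib]
        exact Finset.sum_congr rfl fun s' _ => by ring
      rw [hsplit, pow_succ, mul_comm (γbar ^ k) γbar, mul_assoc]
      refine abs_sum_mul_le _ _ _ _ (hphat s o) (hγphat s o) (fun s' => ?_)
        (by positivity)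
      exact (abs_fmax_sub_le _ _).trans (fmax_le fun o' => ih s' o')
  intro k
  refine fmax_le fun so => ?_
  obtain ⟨s, o⟩ := so
  have tri : |Q k s o - Qstar s o| ≤
      |Q k s o - Qhat s o| + |Qhat s o - QI s o| + |QI s o - Qstar s o| :=
    calc |Q k s o - Qstar s o| ≤ |Q k s o - QI s o| + |QI s o - Qstar s o| :=
          abs_sub_le _ _ _
      _ ≤ |Q k s o - Qhat s o| + |Qhat s o - QI s o| + |QI s o - Qstar s o| :=
          add_le_add_left (abs_sub_le _ _ _) _
  have h1 := hC k s o
  have h2 := hA s o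
  have h3 := hB s o
  have heq1 : γbar ^ k * Rmax / (1 - γbar) = γbar ^ k * (Rmax / (1 - γbar)) := by ring
  have heq2 : ζ * γbar * Rmax / (1 - γbar) ^ 2 =
      γbar * ζ * (Rmax / (1 - γbar)) / (1 - γbar) := by
    field_simp
  rw [heq1, heq2]
  linarith
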